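/- Let α = (√5 − 1)/2 (the fractional part of the golden ratio). Then the Kronecker sequence x_i = iα mod 1 is quasi-uniform over [0,1], with mesh ratio ρ_n ≤ 4 for all n ≥ 2. -/

import Mathlib

open scoped BigOperators

/-- The Gauss-map iterates: `alphaSeq α m` is `α_m`. -/
noncomputable def alphaSeq (α : ℝ) : ℕ → ℝ
  | 0 => Int.fract α
  | m + 1 => Int.fract (1 / alphaSeq α m)

/-- Partial quotients of the continued fraction of `α`: `partialQuot α (m+1) = a_{m+1} = ⌊1/α_m⌋`. -/
noncomputable def partialQuot (α : ℝ) : ℕ → ℕ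
  | 0 => (⌊α⌋).toNat
  | m + 1 => (⌊1 / alphaSeq α m⌋).toNat

/-- `eta α (m+1) = η_m = ∏_{j=0}^m α_j`, with `eta α 0 = η_{-1} = 1`. -/
noncomputable def eta (α : ℝ) : ℕ → ℝ
  | 0 => 1
  | m + 1 => eta α m * alphaSeq α m

/-- `denomSeq α m = s_m`. -/
noncomputable def denomSeq (α : ℝ) : ℕ → ℕ
  | 0 => 1
  | 1 => partialQuot α 1
  | m + 2 => partialQuot α (m + 2) * denomSeq α (m + 1) + denomSeq α m

/-- `denomPred α m = s_{m-1}`, with `s_{-1} = 0`. -/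
noncomputable def denomPred (α : ℝ) : ℕ → ℕ
  | 0 => 0
  | m + 1 => denomSeq α m

/-- `nSeq α m = n_m = s_m + s_{m-1}` (so `n_0 = 1`). -/
noncomputable def nSeq (α : ℝ) (m : ℕ) : ℕ := denomSeq α m + denomPred α m

/-- The Kronecker sequence `x_i = iα mod 1`. -/
noncomputable def kron (α : ℝ) (i : ℕ) : ℝ := Int.fract (i * α)

/-- Fill distance of the first `n` points of `x` in `[0,1]`. -/
noncomputable def fillDist (x : ℕ → ℝ) (n : ℕ) : ℝ :=
  ⨆ y : Set.Icc (0:ℝ) 1, ⨅ i : Fin n, |(y : ℝ) - x i|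

/-- Separation radius of the first `n` points of `x`. -/
noncomputable def sepRad (x : ℕ → ℝ) (n : ℕ) : ℝ :=
  (1 / 2) * ⨅ p : {p : Fin n × Fin n // p.1 < p.2}, |x p.1.1 - x p.1.2|

/-- The first `n` Kronecker points, sorted increasingly. -/
noncomputable def sortedKron (α : ℝ) (n : ℕ) : List ℝ :=
  ((Finset.range n).image (kron α)).sort (· ≤ ·)

/-- The `n` consecutive gap lengths of the first `n` Kronecker points,
including the wrap-around gap up to `1`. -/
noncomputable def kronGaps (α : ℝ) (n : ℕ) : List ℝ :=
  List.zipWith (fun a b => b - a) (sortedKron α n) ((sortedKron α n).tail ++ [1])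


noncomputable def ga : ℝ := (Real.sqrt 5 - 1) / 2

lemma sq5 : Real.sqrt 5 ^ 2 = 5 := Real.sq_sqrt (by norm_num)

lemma sqrt5_ub : Real.sqrt 5 ≤ 2.23607 := by
  have := Real.sqrt_le_sqrt (show (5:ℝ) ≤ 2.23607^2 by norm_num)
  rwa [Real.sqrt_sq (by norm_num)] at this

lemma sqrt5_lb : 2.23606 ≤ Real.sqrt 5 := by
  have := Real.sqrt_le_sqrt (show (2.23606:ℝ)^2 ≤ 5 by norm_num)
  rwa [Real.sqrt_sq (by norm_num)] at this

lemma ga_sq : ga ^ 2 = 1 - ga := by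
  unfold ga; linear_combination sq5 / 4

lemma ga_lb : 0.618 ≤ ga := by unfold ga; nlinarith [sqrt5_lb]
lemma ga_ub : ga ≤ 0.61804 := by unfold ga; nlinarith [sqrt5_ub]
lemma ga_pos : 0 < ga := by nlinarith [ga_lb]
lemma ga_lt1 : ga < 1 := by nlinarith [ga_ub]
lemma sqrt5_eq : Real.sqrt 5 = 2 * ga + 1 := by unfold ga; ring

lemma fibga : ∀ m : ℕ, (Nat.fib (m+1) : ℝ) * ga = Nat.fib m + (-1)^m * ga^(m+1) := by
  have key : ∀ m : ℕ, ((Nat.fib (m+1) : ℝ) * ga = Nat.fib m + (-1)^m * ga^(m+1)) ∧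
      ((Nat.fib (m+2) : ℝ) * ga = Nat.fib (m+1) + (-1)^(m+1) * ga^(m+2)) := by
    intro m
    induction m with
    | zero => constructor <;> simp <;> linear_combination ga_sq
    | succ n ih =>
      refine ⟨ih.2, ?_⟩
      have hrec : (Nat.fib (n+3) : ℝ) = Nat.fib (n+1) + Nat.fib (n+2) := by
        have := Nat.fib_add_two (n := n+1); push_cast [this]; ring
      rw [hrec]
      rw [add_mul, ih.1, ih.2]
      have : (-1:ℝ)^n * ga^(n+1) + (-1)^(n+1) * ga^(n+2) = (-1)^(n+2) * ga^(n+3) := by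
        have h2 : ga^(n+3) = ga^(n+1) * ga^2 := by ring
        rw [h2, ga_sq]; ring
      have hrec2 : (Nat.fib (n+1+1) : ℝ) = Nat.fib n + Nat.fib (n+1) := by
        push_cast [Nat.fib_add_two (n := n)]; ring
      linear_combination this - hrec2
  exact fun m => (key m).1

lemma fibga2 : ∀ m : ℕ, Real.sqrt 5 * ((Nat.fib m : ℝ) * ga^m) = 1 - (-1)^m * ga^(2*m) := by
  have key : ∀ m : ℕ, (Real.sqrt 5 * ((Nat.fib m : ℝ) * ga^m) = 1 - (-1)^m * ga^(2*m)) ∧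
      (Real.sqrt 5 * ((Nat.fib (m+1) : ℝ) * ga^(m+1)) = 1 - (-1)^(m+1) * ga^(2*(m+1))) := by
    intro m
    induction m with
    | zero =>
      constructor
      · simp
      · simp [sqrt5_eq]; linear_combination ga_sq
    | succ n ih =>
      refine ⟨ih.2, ?_⟩
      have hrec : (Nat.fib (n+2) : ℝ) = Nat.fib n + Nat.fib (n+1) := by
        push_cast [Nat.fib_add_two (n := n)]; ring
      rw [hrec]
      have e1 := ih.1
      have e2 := ih.2
      have hsq : ga^2 = 1 - ga := ga_sq
      -- √5 (fib n + fib (n+1)) ga^(n+2) = ga^2 * e1' + ga * e2'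
      have : Real.sqrt 5 * ((Nat.fib n + Nat.fib (n+1) : ℝ) * ga^(n+2))
          = ga^2 * (Real.sqrt 5 * ((Nat.fib n : ℝ) * ga^n)) + ga * (Real.sqrt 5 * ((Nat.fib (n+1) : ℝ) * ga^(n+1))) := by ring
      rw [this, e1, e2]
      have expand : ga^2 * (1 - (-1)^n * ga^(2*n)) + ga * (1 - (-1)^(n+1) * ga^(2*(n+1)))
          = 1 - (-1)^(n+2) * ga^(2*(n+2)) := by
        have h1 : (-1:ℝ)^(n+1) = -(-1)^n := by ring
        have h2 : (-1:ℝ)^(n+2) = (-1)^n := by ring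
        rw [h1, h2]
        have g1 : ga^(2*(n+1)) = ga^(2*n) * ga^2 := by ring
        have g2 : ga^(2*(n+2)) = ga^(2*n) * ga^2 * ga^2 := by ring
        rw [g1, g2, ga_sq]; ring
      rw [expand]
  exact fun m => (key m).1
lemma descent : ∀ k : ℕ, 1 ≤ k → ∀ K : ℕ,
    (K^2 + K*k = k^2 + 1 ∨ K^2 + K*k + 1 = k^2) →
    ∃ j, 1 ≤ j ∧ k = Nat.fib j ∧ K = Nat.fib (j-1) := by
  intro k
  induction k using Nat.strong_induction_on with
  | _ k ih =>
    intro hk1 K hK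
    rcases Nat.lt_or_ge k 2 with hk2 | hk2
    · interval_cases k
      · rcases hK with h | h
        · have : K = 1 := by nlinarith
          exact ⟨2, by norm_num, by simp [Nat.fib], by simp [this, Nat.fib]⟩
        · have : K = 0 := by nlinarith
          exact ⟨1, by norm_num, by simp [Nat.fib], by simp [this, Nat.fib]⟩
    · have hK0 : 1 ≤ K := by
        rcases Nat.eq_zero_or_pos K with h0 | h
        · subst h0; rcases hK with h | h <;> nlinarith
        · exact h
      have hKk : K < k := by
        by_contra h
        push_neg at h
        rcases hK with heq | heq <;> nlinarith
      have hnew : (k-K)^2 + (k-K)*K = K^2 + 1 ∨ (k-K)^2 + (k-K)*K + 1 = K^2 := by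
        rcases hK with h | h
        · right; zify [Nat.le_of_lt hKk] at h ⊢; nlinarith
        · left; zify [Nat.le_of_lt hKk] at h ⊢; nlinarith
      obtain ⟨j, hj1, hjk, hjK⟩ := ih K hKk hK0 (k - K) hnew
      have hfib : Nat.fib (j+1) = Nat.fib j + Nat.fib (j-1) := by
        rcases j with _ | j'
        · omega
        · rw [show j'+1+1 = j'+2 from rfl, Nat.fib_add_two,
            show j'+1-1 = j' from rfl]; omega
      refine ⟨j+1, by omega, by omega, by simpa using hjk⟩
lemma ga_pow_anti {j m : ℕ} (h : j ≤ m) : ga^m ≤ ga^j :=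
  pow_le_pow_of_le_one (le_of_lt ga_pos) (le_of_lt ga_lt1) h

lemma ga_pow_pos (m : ℕ) : 0 < ga^m := pow_pos ga_pos m

lemma sqrt5_ga : Real.sqrt 5 * ga = 2 - ga := by
  rw [sqrt5_eq]; linear_combination 2 * ga_sq

lemma ga6_ub : ga^6 ≤ 0.056 := by
  have h : ga^6 = (1-ga)^3 := by rw [← ga_sq]; ring
  rw [h]
  nlinarith [ga_lb, ga_ub, sq_nonneg (1-ga)]

set_option maxHeartbeats 1000000 in
lemma best_approx (m : ℕ) (hm : 2 ≤ m) (k : ℕ) (hk1 : 1 ≤ k)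
    (hk2 : k < Nat.fib (m+1)) (K : ℤ) : ga^m ≤ |(k:ℝ) * ga - K| := by
  have hga2 : ga^m ≤ ga^2 := ga_pow_anti hm
  have hk1' : (1:ℝ) ≤ (k:ℝ) := by exact_mod_cast hk1
  by_cases hhalf : (1:ℝ)/2 ≤ |(k:ℝ) * ga - K|
  · nlinarith [ga_sq, ga_lb]
  push_neg at hhalf
  have habslt := abs_lt.mp hhalf
  have hK0 : (0:ℤ) ≤ K := by
    have h0 : (0:ℝ) ≤ (K:ℝ) := by nlinarith [ga_lb]
    exact_mod_cast h0
  have hK0' : (0:ℝ) ≤ (K:ℝ) := by exact_mod_cast hK0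
  have hKup : (K:ℝ) ≤ (k:ℝ) * ga + 1/2 := by linarith
  set D : ℤ := K^2 + K*k - k^2 with hD
  have hid : ((k:ℝ)*ga - K) * ((k:ℝ) + (K:ℝ)*ga) = -((D:ℝ)) * ga := by
    push_cast [hD]
    linear_combination ((k:ℝ)*(K:ℝ)) * ga_sq
  have hpos : (0:ℝ) < (k:ℝ) + (K:ℝ)*ga := by nlinarith [ga_pos]
  have habs : |(k:ℝ)*ga - K| * ((k:ℝ) + (K:ℝ)*ga) = |(D:ℝ)| * ga := by
    have := congrArg abs hid
    rwa [abs_mul, abs_mul, abs_of_pos hpos, abs_of_pos ga_pos, abs_neg] at this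
  rcases eq_or_ne D 0 with hD0 | hD0
  · -- D = 0 impossible : sqrt 5 would be rational
    exfalso
    rw [hD0] at habs
    push_cast at habs
    rw [abs_zero, zero_mul] at habs
    have hzero : |(k:ℝ)*ga - K| = 0 := by
      rcases mul_eq_zero.mp habs with h | h
      · exact h
      · linarith
    have hkK : (k:ℝ) * ga = K := by
      have := abs_eq_zero.mp hzero; linarith
    have hirr : Irrational (Real.sqrt 5) :=
      Nat.Prime.irrational_sqrt (by norm_num)
    refine hirr ⟨((2*K + k : ℤ) : ℚ) / ((k:ℤ) : ℚ), ?_⟩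
    have hkne : ((k:ℤ):ℚ) ≠ 0 := by
      simp only [ne_eq, Int.cast_eq_zero, Nat.cast_eq_zero]; omega
    push_cast
    rw [div_eq_iff (by exact_mod_cast hkne)]
    rw [sqrt5_eq]
    push_cast at hkK ⊢
    linarith [hkK]
  · have hD1 : (1:ℤ) ≤ |D| := Int.one_le_abs hD0
    rcases eq_or_lt_of_le hD1 with hD1e | hD2
    · -- |D| = 1 : Fibonacci case
      have hDe : D = 1 ∨ D = -1 := (abs_eq (by norm_num : (0:ℤ) ≤ 1)).mp hD1e.symm
      set KN : ℕ := K.toNat with hKNdef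
      have hKN : (KN : ℤ) = K := Int.toNat_of_nonneg hK0
      have hnat : KN^2 + KN*k = k^2 + 1 ∨ KN^2 + KN*k + 1 = k^2 := by
        rcases hDe with h | h
        · left
          have hh : K^2 + K*(k:ℤ) - (k:ℤ)^2 = 1 := by rw [← h, hD]
          have : ((KN^2 + KN*k : ℕ) : ℤ) = ((k^2 + 1 : ℕ) : ℤ) := by
            push_cast [hKN]; linarith
          exact_mod_cast this
        · right
          have hh : K^2 + K*(k:ℤ) - (k:ℤ)^2 = -1 := by rw [← h, hD]
          have : ((KN^2 + KN*k + 1 : ℕ) : ℤ) = ((k^2 : ℕ) : ℤ) := by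
            push_cast [hKN]; linarith
          exact_mod_cast this
      obtain ⟨j, hj1, hjk, hjK⟩ := descent k hk1 KN hnat
      rcases j with _ | j'
      · omega
      rw [Nat.succ_sub_one] at hjK
      have hf := fibga j'
      have hval : (k:ℝ)*ga - K = (-1)^(j') * ga^(j'+1) := by
        rw [hjk]
        have hKr : (K:ℝ) = (Nat.fib j' : ℝ) := by
          rw [← hKN, hjK]; push_cast; ring
        rw [hKr, hf]; ring
      have habseq : |(k:ℝ)*ga - K| = ga^(j'+1) := by
        rw [hval, abs_mul, abs_pow, abs_neg, abs_one, one_pow, one_mul,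
          abs_of_pos (ga_pow_pos _)]
      have hj'1 : 1 ≤ j' := by
        by_contra hc
        push_neg at hc
        interval_cases j'
        · rw [habseq] at hhalf
          norm_num at hhalf
          nlinarith [ga_lb]
      have hjm : j' + 1 ≤ m := by
        by_contra hc
        push_neg at hc
        have : Nat.fib (m+1) ≤ Nat.fib (j'+1) := Nat.fib_mono (by omega)
        omega
      rw [habseq]
      exact ga_pow_anti hjm
    · -- |D| ≥ 2 : quantitative bound
      have hD2' : (2:ℝ) ≤ |(D:ℝ)| := by
        rw [← Int.cast_abs]; exact_mod_cast hD2
      have hkfib : (k:ℝ) ≤ (Nat.fib (m+1) : ℝ) - 1 := by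
        have h' : k + 1 ≤ Nat.fib (m+1) := hk2
        have := (Nat.cast_le (α := ℝ)).mpr h'
        push_cast at this; linarith
      have hfid := fibga2 (m+1)
      have h1 : ga^m * ((Nat.fib (m+1) : ℝ)) * (2 - ga) = 1 - (-1)^(m+1)*ga^(2*(m+1)) := by
        rw [← hfid, ← sqrt5_ga]; ring
      have hT : ga^(2*(m+1)) ≤ 0.056 := le_trans (ga_pow_anti (by omega)) ga6_ub
      have h2g : (0:ℝ) < 2 - ga := by nlinarith [ga_ub]
      have key : ga^m * ((k:ℝ) + (K:ℝ)*ga) ≤ 2*ga := by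
        have step1 : (k:ℝ) + (K:ℝ)*ga ≤ ((Nat.fib (m+1):ℝ) - 1)*(2-ga) + ga/2 := by
          have hKga : (K:ℝ)*ga ≤ ((k:ℝ)*ga + 1/2)*ga := by nlinarith [ga_pos]
          have hk2g : (k:ℝ)*(2-ga) ≤ ((Nat.fib (m+1):ℝ) - 1)*(2-ga) :=
            mul_le_mul_of_nonneg_right hkfib h2g.le
          have e : (k:ℝ) + ((k:ℝ)*ga + 1/2)*ga = (k:ℝ)*(2-ga) + ga/2 := by
            linear_combination (k:ℝ) * ga_sq
          linarith [hKga, hk2g, e]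
        have step2 : ga^m * ((k:ℝ) + (K:ℝ)*ga)
            ≤ ga^m * (((Nat.fib (m+1):ℝ) - 1)*(2-ga) + ga/2) :=
          mul_le_mul_of_nonneg_left step1 (ga_pow_pos m).le
        have hXfact : (0:ℝ) ≤ ga^m * (2 - ga) - ga^m * ga / 2 := by
          have hh : (0:ℝ) ≤ ga^m * (2 - (3/2)*ga) :=
            mul_nonneg (ga_pow_pos m).le (by nlinarith [ga_ub])
          nlinarith [hh]
        have hmid : ga^m * ((Nat.fib (m+1):ℝ)) * (2-ga) ≤ 1 + ga^(2*(m+1)) := by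
          rcases Nat.even_or_odd (m+1) with he | ho
          · rw [he.neg_one_pow] at h1
            rw [h1]; linarith [ga_pow_pos (2*(m+1))]
          · rw [ho.neg_one_pow] at h1
            rw [h1]; linarith [ga_pow_pos (2*(m+1))]
        calc ga^m * ((k:ℝ) + (K:ℝ)*ga)
            ≤ ga^m * (((Nat.fib (m+1):ℝ) - 1)*(2-ga) + ga/2) := step2
          _ = ga^m * ((Nat.fib (m+1):ℝ)) * (2-ga) - (ga^m*(2-ga) - ga^m*ga/2) := by ring
          _ ≤ ga^m * ((Nat.fib (m+1):ℝ)) * (2-ga) := by linarith [hXfact]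
          _ ≤ 1 + ga^(2*(m+1)) := hmid
          _ ≤ 2*ga := by linarith [hT, ga_lb]
      have hfin : ga^m * ((k:ℝ) + (K:ℝ)*ga) ≤ |(k:ℝ)*ga - K| * ((k:ℝ) + (K:ℝ)*ga) := by
        rw [habs]
        calc ga^m * ((k:ℝ) + (K:ℝ)*ga) ≤ 2*ga := key
          _ ≤ |(D:ℝ)| * ga := by nlinarith [ga_pos]
      exact le_of_mul_le_mul_right hfin hpos
lemma exists_m (n : ℕ) (hn : 2 ≤ n) : ∃ m, 3 ≤ m ∧ Nat.fib m ≤ n ∧ n < Nat.fib (m+1) := by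
  induction n, hn using Nat.le_induction with
  | base => exact ⟨3, by norm_num, by decide, by decide⟩
  | succ n hn ih =>
    obtain ⟨m, h3, h1, h2⟩ := ih
    rcases Nat.lt_or_ge (n+1) (Nat.fib (m+1)) with h | h
    · exact ⟨m, h3, by omega, h⟩
    · refine ⟨m+1, by omega, by omega, ?_⟩
      have hrec : Nat.fib (m+1+1) = Nat.fib m + Nat.fib (m+1) := Nat.fib_add_two
      have hpos : 0 < Nat.fib m := Nat.fib_pos.mpr (by omega)
      omega

lemma qgam (m : ℕ) (hm : 3 ≤ m) :
    1/3 ≤ (Nat.fib m : ℝ) * ga^m ∧ (Nat.fib m : ℝ) * ga^m < 1/2 := by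
  have hfid := fibga2 m
  have hT : ga^(2*m) ≤ 0.056 := le_trans (ga_pow_anti (by omega)) ga6_ub
  have hTpos : 0 < ga^(2*m) := ga_pow_pos _
  have hXpos : 0 ≤ (Nat.fib m : ℝ) * ga^m :=
    mul_nonneg (Nat.cast_nonneg _) (ga_pow_pos m).le
  rcases Nat.even_or_odd m with he | ho
  · rw [he.neg_one_pow] at hfid
    constructor <;> nlinarith [sqrt5_ub, sqrt5_lb]
  · rw [ho.neg_one_pow] at hfid
    constructor <;> nlinarith [sqrt5_ub, sqrt5_lb]

lemma eps_exists (m : ℕ) (hm : 1 ≤ m) :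
    ∃ ε : ℝ, (Nat.fib m : ℝ) * ga = (Nat.fib (m-1) : ℝ) + ε ∧ |ε| = ga^m := by
  obtain ⟨m', rfl⟩ : ∃ m', m = m'+1 := ⟨m-1, by omega⟩
  refine ⟨(-1)^(m') * ga^(m'+1), by simpa using fibga m', ?_⟩
  rw [abs_mul, abs_pow, abs_neg, abs_one, one_pow, one_mul, abs_of_pos (ga_pow_pos _)]

lemma near_one (r : ℕ) (hodd : Odd r) :
    Int.fract ((Nat.fib (r+1) : ℝ) * ga) = 1 - ga^(r+1) := by
  have hf := fibga r
  rw [hf, hodd.neg_one_pow]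
  have hr1 : 1 ≤ r := hodd.pos
  have hfibpos : 1 ≤ Nat.fib r := Nat.fib_pos.mpr (by omega)
  have h1 : (Nat.fib r : ℝ) + (-1)*ga^(r+1) = ((Nat.fib r - 1 : ℤ) : ℝ) + (1 - ga^(r+1)) := by
    push_cast [hfibpos]; ring
  rw [h1, Int.fract_intCast_add, Int.fract_eq_self.mpr
    ⟨by nlinarith [ga_pow_pos (r+1), pow_lt_one₀ (le_of_lt ga_pos) ga_lt1 (by omega : r+1 ≠ 0)],
     by nlinarith [ga_pow_pos (r+1)]⟩]

lemma grid_point (m : ℕ) (hm : 3 ≤ m) (ε : ℝ)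
    (heps : (Nat.fib m : ℝ) * ga = (Nat.fib (m-1) : ℝ) + ε) (habs : |ε| = ga^m)
    (j : ℕ) (hj : j < Nat.fib m) :
    ∃ i < Nat.fib m, Int.fract ((i:ℝ) * ga) = ((j:ℝ) + (i:ℝ) * ε) / (Nat.fib m : ℝ) := by
  have hq2 : 2 ≤ Nat.fib m := by
    have h := Nat.fib_mono hm
    simpa [show Nat.fib 3 = 2 by decide] using h
  set q := Nat.fib m with hqdef
  haveI : NeZero q := ⟨by omega⟩
  have hqR : (0:ℝ) < (q:ℝ) := by exact_mod_cast (by omega : 0 < q)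
  rcases Nat.eq_zero_or_pos j with hj0 | hjpos
  · subst hj0
    exact ⟨0, by omega, by simp⟩
  · have hcop : Nat.Coprime (Nat.fib (m-1)) q := by
      have h := Nat.fib_coprime_fib_succ (m-1)
      rwa [show m-1+1 = m by omega] at h
    set x : ZMod q := (j : ZMod q) * (Nat.fib (m-1) : ZMod q)⁻¹ with hx
    set i : ℕ := x.val with hi
    have hilt : i < q := ZMod.val_lt x
    have hmod : (i * Nat.fib (m-1)) % q = j := by
      have h1 : ((i * Nat.fib (m-1) : ℕ) : ZMod q) = ((j:ℕ) : ZMod q) := by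
        push_cast
        rw [hi, ZMod.natCast_zmod_val, hx, mul_assoc, mul_comm ((Nat.fib (m-1) : ZMod q))⁻¹ _,
          ZMod.coe_mul_inv_eq_one _ hcop, mul_one]
      have h2 := (ZMod.natCast_eq_natCast_iff _ _ _).mp h1
      have h3 : (i * Nat.fib (m-1)) % q = j % q := h2
      rwa [Nat.mod_eq_of_lt hj] at h3
    set t : ℕ := (i * Nat.fib (m-1)) / q with ht
    have hdiv : q * t + j = i * Nat.fib (m-1) := by
      have h := Nat.div_add_mod (i * Nat.fib (m-1)) q
      rw [← ht, hmod] at h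
      omega
    have hdivR : (q:ℝ)*(t:ℝ) + (j:ℝ) = (i:ℝ) * (Nat.fib (m-1) : ℝ) := by
      exact_mod_cast hdiv
    have key : (i:ℝ)*ga*(q:ℝ) = (q:ℝ)*t + j + (i:ℝ)*ε := by
      linear_combination (i:ℝ)*heps - hdivR
    have hieps : |(i:ℝ)*ε| ≤ ((q:ℝ)-1) * ga^m := by
      rw [abs_mul, habs]
      have : |(i:ℝ)| ≤ (q:ℝ)-1 := by
        rw [abs_of_nonneg (by positivity)]
        have : (i:ℝ) ≤ (q:ℝ) - 1 := by
          have : (i:ℝ) + 1 ≤ (q:ℝ) := by exact_mod_cast hilt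
          linarith
        exact this
      exact mul_le_mul_of_nonneg_right this (le_of_lt (ga_pow_pos m)) |>.trans_eq rfl
    have hqg := qgam m hm
    have hqg2 : ((q:ℝ)-1) * ga^m < 1/2 := by
      have := ga_pow_pos m
      nlinarith [hqg.2]
    have habslt := abs_le.mp hieps
    set v : ℝ := ((j:ℝ) + (i:ℝ)*ε)/(q:ℝ) with hv
    have hj1 : (1:ℝ) ≤ (j:ℝ) := by exact_mod_cast hjpos
    have hjq : (j:ℝ) ≤ (q:ℝ) - 1 := by
      have : (j:ℝ) + 1 ≤ (q:ℝ) := by exact_mod_cast hj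
      linarith
    have hv0 : 0 ≤ v := by
      apply div_nonneg _ hqR.le
      nlinarith
    have hv1 : v < 1 := by
      rw [hv, div_lt_one hqR]
      nlinarith
    have higa : (i:ℝ)*ga = (t:ℝ) + v := by
      rw [hv]
      field_simp
      linear_combination key
    refine ⟨i, hilt, ?_⟩
    rw [higa, show ((t:ℕ):ℝ) = (((t:ℕ):ℤ):ℝ) by push_cast; ring,
      Int.fract_intCast_add, Int.fract_eq_self.mpr ⟨hv0, hv1⟩]
lemma ga_pow_half (e : ℕ) : ga^e ≤ 2*ga^(e+1) := by
  have h := ga_pow_pos e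
  rw [pow_succ]
  nlinarith [ga_lb]

lemma odd_sub_two_aux {m : ℕ} (h : Odd m) (hm : 2 ≤ m) : Odd (m-2) := by
  rcases h with ⟨t, ht⟩
  exact ⟨t-1, by omega⟩

lemma boundary_point (m n : ℕ) (hm : 3 ≤ m) (h1 : Nat.fib m ≤ n) (h2 : n < Nat.fib (m+1)) :
    ∃ i0 : ℕ, i0 < n ∧
      1 - 2*(if n = Nat.fib m then ga^(m-1) else ga^m) ≤ Int.fract ((i0:ℝ)*ga) ∧
      Int.fract ((i0:ℝ)*ga) < 1 := by
  by_cases hn : n = Nat.fib m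
  · rw [if_pos hn]
    rcases Nat.even_or_odd m with he | ho
    · -- m even, use fib (m-2) = fib ((m-3)+1), value 1 - ga^(m-2)
      have hm4 : 4 ≤ m := by rcases he with ⟨t, ht⟩; omega
      have hodd : Odd (m-3) := by
        rcases he with ⟨t, ht⟩; exact ⟨t-2, by omega⟩
      have hval := near_one (m-3) hodd
      refine ⟨Nat.fib (m-3+1), ?_, ?_, ?_⟩
      · have : Nat.fib (m-3+1) ≤ Nat.fib (m-1) := Nat.fib_mono (by omega)
        have h' : Nat.fib (m-1) < Nat.fib (m-1+1) := Nat.fib_lt_fib_succ (by omega)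
        rw [show m-1+1 = m by omega] at h'
        omega
      · rw [hval, show m-3+1 = m-2 by omega]
        have hh := ga_pow_half (m-2)
        rw [show m-2+1 = m-1 by omega] at hh
        linarith
      · rw [hval]
        have := ga_pow_pos (m-3+1); linarith
    · -- m odd, use fib (m-1) = fib ((m-2)+1), value 1 - ga^(m-1)
      have hodd : Odd (m-2) := odd_sub_two_aux ho (by omega)
      have hval := near_one (m-2) hodd
      refine ⟨Nat.fib (m-2+1), ?_, ?_, ?_⟩
      · have h' : Nat.fib (m-1) < Nat.fib (m-1+1) := Nat.fib_lt_fib_succ (by omega)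
        rw [show m-1+1 = m by omega] at h'
        rw [show m-2+1 = m-1 by omega]
        omega
      · rw [hval, show m-2+1 = m-1 by omega]
        have := ga_pow_pos (m-1)
        linarith
      · rw [hval]
        have := ga_pow_pos (m-2+1); linarith
  · rw [if_neg hn]
    have hlt : Nat.fib m < n := by omega
    rcases Nat.even_or_odd m with he | ho
    · -- m even, use fib m = fib ((m-1)+1), value 1 - ga^m
      have hodd : Odd (m-1) := by rcases he with ⟨t, ht⟩; exact ⟨t-1, by omega⟩
      have hval := near_one (m-1) hodd
      refine ⟨Nat.fib (m-1+1), ?_, ?_, ?_⟩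
      · rw [show m-1+1 = m by omega]; omega
      · rw [hval, show m-1+1 = m by omega]
        have := ga_pow_pos m
        linarith
      · rw [hval]
        have := ga_pow_pos (m-1+1); linarith
    · -- m odd, use fib (m-1), value 1 - ga^(m-1)
      have hodd : Odd (m-2) := odd_sub_two_aux ho (by omega)
      have hval := near_one (m-2) hodd
      refine ⟨Nat.fib (m-2+1), ?_, ?_, ?_⟩
      · have h' : Nat.fib (m-1) < Nat.fib (m-1+1) := Nat.fib_lt_fib_succ (by omega)
        rw [show m-1+1 = m by omega] at h'
        rw [show m-2+1 = m-1 by omega]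
        omega
      · rw [hval, show m-2+1 = m-1 by omega]
        have hh := ga_pow_half (m-1)
        rw [show m-1+1 = m by omega] at hh
        have := ga_pow_pos (m-1)
        linarith
      · rw [hval]
        have := ga_pow_pos (m-2+1); linarith
set_option maxHeartbeats 1000000 in
lemma fill_exists (m n : ℕ) (hm : 3 ≤ m) (h1 : Nat.fib m ≤ n) (h2 : n < Nat.fib (m+1))
    (y : ℝ) (hy0 : 0 ≤ y) (hy1 : y ≤ 1) :
    ∃ i < n, |y - Int.fract ((i:ℝ) * ga)| ≤
      2 * (if n = Nat.fib m then ga^(m-1) else ga^m) := by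
  set s : ℝ := if n = Nat.fib m then ga^(m-1) else ga^m with hs
  have hs_ge : ga^m ≤ s := by
    rw [hs]; split
    · exact ga_pow_anti (by omega)
    · exact le_refl _
  have hs_pos : 0 < s := by rw [hs]; split <;> exact ga_pow_pos _
  have hq2 : 2 ≤ Nat.fib m := by have h := Nat.fib_mono hm; simpa [show Nat.fib 3 = 2 by decide] using h
  set q := Nat.fib m with hqdef
  have hqn : q ≤ n := h1
  have hqR : (0:ℝ) < (q:ℝ) := by exact_mod_cast (by omega : 0 < q)
  obtain ⟨ε, heps, habs⟩ := eps_exists m (by omega)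
  obtain ⟨i0, hi0n, hz1, hz2⟩ := boundary_point m n hm h1 h2
  rw [← hs] at hz1
  set G := ga^m with hG
  have hG_pos : 0 < G := ga_pow_pos m
  have hqg := qgam m hm
  rw [← hqdef, ← hG] at hqg
  -- grid index
  set jr : ℕ := min (⌊y * q⌋.toNat) (q - 1) with hjr
  have hjrq : jr < q := by omega
  have hfl0 : (0:ℤ) ≤ ⌊y * (q:ℝ)⌋ := Int.floor_nonneg.mpr (by positivity)
  have hb : (⌊y * (q:ℝ)⌋.toNat : ℤ) = ⌊y * (q:ℝ)⌋ := Int.toNat_of_nonneg hfl0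
  have hlow : (jr:ℝ) ≤ y * q := by
    have ha : (jr:ℕ) ≤ ⌊y * (q:ℝ)⌋.toNat := Nat.min_le_left _ _
    have hc : ((jr:ℕ):ℤ) ≤ ⌊y * (q:ℝ)⌋ := by omega
    calc (jr:ℝ) = (((jr:ℕ):ℤ):ℝ) := by push_cast; ring
      _ ≤ ((⌊y * (q:ℝ)⌋ : ℤ) : ℝ) := by exact_mod_cast hc
      _ ≤ y * q := Int.floor_le _
  have hup : y * q ≤ (jr:ℝ) + 1 := by
    rcases le_or_gt (⌊y * (q:ℝ)⌋.toNat) (q - 1) with hc | hc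
    · have hfl : ((jr:ℕ):ℤ) = ⌊y * (q:ℝ)⌋ := by omega
      have h3 : y * q < ((⌊y * (q:ℝ)⌋:ℤ):ℝ) + 1 := Int.lt_floor_add_one _
      rw [← hfl] at h3
      push_cast at h3
      linarith
    · have hjr_eq : jr = q - 1 := by omega
      have : ((jr:ℕ):ℝ) = (q:ℝ) - 1 := by
        rw [hjr_eq]; push_cast [show 1 ≤ q by omega]; ring
      rw [this]
      nlinarith
  -- point near grid jr
  obtain ⟨iA, hiA, hAeq⟩ := grid_point m hm ε heps habs jr hjrq
  rw [← hqdef] at hiA hAeq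
  set A := Int.fract ((iA:ℝ) * ga) with hA
  set dA : ℝ := (iA:ℝ) * ε with hdA
  have hAq : A * q = (jr:ℝ) + dA := by
    rw [hAeq]; field_simp
  have hdA_bound : |dA| ≤ (q:ℝ) * G := by
    rw [hdA, abs_mul, habs, hG]
    have h1' : |(iA:ℝ)| ≤ (q:ℝ) := by
      rw [abs_of_nonneg (by positivity)]
      exact_mod_cast hiA.le
    exact mul_le_mul_of_nonneg_right h1' (ga_pow_pos m).le
  have hdA' := abs_le.mp hdA_bound
  have hGq1 : 1 ≤ 3 * ((q:ℝ) * G) := by linarith [hqg.1]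
  have hGs : (q:ℝ) * G ≤ (q:ℝ) * s := mul_le_mul_of_nonneg_left hs_ge hqR.le
  rcases le_or_gt y A with hyA | hyA
  · -- y left of A
    refine ⟨iA, by omega, ?_⟩
    rw [← hA, abs_of_nonpos (by linarith)]
    have hkey : (A - y) * q ≤ (2*s) * q := by
      have e1 : (A - y) * q = A * q - y * q := by ring
      rw [e1, hAq]
      nlinarith [hs_pos]
    have := le_of_mul_le_mul_right (by linarith [hkey] : (A - y) * q ≤ 2*s*q) hqR
    linarith
  · rcases Nat.lt_or_ge (jr+1) q with hcase | hcase
    · -- interior : point near grid jr+1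
      obtain ⟨iB, hiB, hBeq⟩ := grid_point m hm ε heps habs (jr+1) hcase
      rw [← hqdef] at hiB hBeq
      set B := Int.fract ((iB:ℝ) * ga) with hB
      set dB : ℝ := (iB:ℝ) * ε with hdB
      have hBq : B * q = (jr:ℝ) + 1 + dB := by
        rw [hBeq]; push_cast; field_simp
      have hdBA : |dB - dA| ≤ (q:ℝ) * G := by
        have : dB - dA = ((iB:ℝ) - iA) * ε := by rw [hdB, hdA]; ring
        rw [this, abs_mul, habs, hG]
        have h1' : |(iB:ℝ) - iA| ≤ (q:ℝ) := by
          rw [abs_le]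
          constructor
          · have : (0:ℝ) ≤ (iB:ℝ) := by positivity
            have h2' : (iA:ℝ) ≤ (q:ℝ) := by exact_mod_cast hiA.le
            linarith
          · have : (0:ℝ) ≤ (iA:ℝ) := by positivity
            have h2' : (iB:ℝ) ≤ (q:ℝ) := by exact_mod_cast hiB.le
            linarith
        exact mul_le_mul_of_nonneg_right h1' (ga_pow_pos m).le
      have hdBA' := abs_le.mp hdBA
      rcases le_or_gt B y with hyB | hyB
      · -- y right of B
        refine ⟨iB, by omega, ?_⟩
        rw [← hB, abs_of_nonneg (by linarith)]
        have hdB_bound : |dB| ≤ (q:ℝ) * G := by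
          rw [hdB, abs_mul, habs, hG]
          have h1' : |(iB:ℝ)| ≤ (q:ℝ) := by
            rw [abs_of_nonneg (by positivity)]
            exact_mod_cast hiB.le
          exact mul_le_mul_of_nonneg_right h1' (ga_pow_pos m).le
        have hdB' := abs_le.mp hdB_bound
        have hkey : (y - B) * q ≤ (2*s) * q := by
          have e1 : (y - B) * q = y * q - B * q := by ring
          rw [e1, hBq]
          nlinarith [hs_pos]
        have := le_of_mul_le_mul_right hkey hqR
        linarith
      · -- A < y < B : take the closer one
        have hBA : (B - A) * q ≤ 4 * ((q:ℝ) * G) := by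
          have e1 : (B - A) * q = B * q - A * q := by ring
          rw [e1, hBq, hAq]
          linarith [hdBA'.2]
        rcases le_total (y - A) (B - y) with hmin | hmin
        · refine ⟨iA, by omega, ?_⟩
          rw [← hA, abs_of_nonneg (by linarith)]
          have hkey : (y - A) * q ≤ (2*s) * q := by
            nlinarith [hBA, hGs]
          have := le_of_mul_le_mul_right hkey hqR
          linarith
        · refine ⟨iB, by omega, ?_⟩
          rw [← hB, abs_of_nonpos (by linarith)]
          have hkey : (B - y) * q ≤ (2*s) * q := by
            nlinarith [hBA, hGs]
          have := le_of_mul_le_mul_right hkey hqR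
          linarith
    · -- jr = q - 1 : boundary
      have hjr_eq : (jr:ℝ) = (q:ℝ) - 1 := by
        have : jr = q - 1 := by omega
        rw [this]; push_cast [show 1 ≤ q by omega]; ring
      set z := Int.fract ((i0:ℝ) * ga) with hzdef
      rcases le_or_gt z y with hyz | hyz
      · refine ⟨i0, hi0n, ?_⟩
        rw [← hzdef, abs_of_nonneg (by linarith)]
        linarith
      · -- A < y < z
        have h1A : (1 - A) * q ≤ 4 * ((q:ℝ) * G) := by
          have e1 : (1 - A) * q = q - A * q := by ring
          rw [e1, hAq, hjr_eq]
          linarith [hdA'.1]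
        rcases le_total (y - A) (z - y) with hmin | hmin
        · refine ⟨iA, by omega, ?_⟩
          rw [← hA, abs_of_nonneg (by linarith)]
          have hkey : (y - A) * q ≤ (2*s) * q := by
            have hzy : y - A ≤ z - y := hmin
            have hz1' : z ≤ 1 := hz2.le
            nlinarith [h1A, hGs, hqR]
          have := le_of_mul_le_mul_right hkey hqR
          linarith
        · refine ⟨i0, hi0n, ?_⟩
          rw [← hzdef, abs_of_nonpos (by linarith)]
          have hkey : (z - y) * q ≤ (2*s) * q := by
            have hz1' : z ≤ 1 := hz2.le
            nlinarith [h1A, hGs, hqR]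
          have := le_of_mul_le_mul_right hkey hqR
          linarith

lemma sep_lb (m n : ℕ) (hm : 3 ≤ m) (h1 : Nat.fib m ≤ n) (h2 : n < Nat.fib (m+1))
    (i j : ℕ) (hij : i < j) (hjn : j < n) :
    (if n = Nat.fib m then ga^(m-1) else ga^m) ≤
      |Int.fract ((i:ℝ)*ga) - Int.fract ((j:ℝ)*ga)| := by
  set k := j - i with hk
  have hk1 : 1 ≤ k := by omega
  have heq : Int.fract ((i:ℝ)*ga) - Int.fract ((j:ℝ)*ga)
      = -((k:ℝ)*ga - ((⌊(j:ℝ)*ga⌋ - ⌊(i:ℝ)*ga⌋ : ℤ) : ℝ)) := by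
    rw [Int.fract, Int.fract]
    have : ((k:ℕ):ℝ) = (j:ℝ) - (i:ℝ) := by
      rw [hk]; push_cast [Nat.le_of_lt hij]; ring
    rw [this]; push_cast; ring
  rw [heq, abs_neg]
  split
  · next h =>
    have hkfib : k < Nat.fib ((m-1)+1) := by
      rw [show m-1+1 = m by omega]; omega
    exact best_approx (m-1) (by omega) k hk1 hkfib _
  · next h =>
    have hkfib : k < Nat.fib (m+1) := by omega
    exact best_approx m (by omega) k hk1 hkfib _
/-- The golden-ratio Kronecker sequence is quasi-uniform with mesh ratio at
most `4`. -/
theorem kronecker_golden_quasi_uniform :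
    ∀ n ≥ 2, fillDist (kron ((Real.sqrt 5 - 1) / 2)) n /
      sepRad (kron ((Real.sqrt 5 - 1) / 2)) n ≤ 4 := by
  intro n hn
  have hga : ((Real.sqrt 5 - 1) / 2) = ga := rfl
  rw [hga]
  obtain ⟨m, hm, h1, h2⟩ := exists_m n hn
  set s : ℝ := if n = Nat.fib m then ga^(m-1) else ga^m with hs
  have hs_pos : 0 < s := by rw [hs]; split <;> exact ga_pow_pos _
  haveI : Nonempty (Fin n) := ⟨⟨0, by omega⟩⟩
  have hsep : s/2 ≤ sepRad (kron ga) n := by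
    rw [sepRad]
    haveI : Nonempty {p : Fin n × Fin n // p.1 < p.2} :=
      ⟨⟨(⟨0, by omega⟩, ⟨1, by omega⟩), by simp [Fin.lt_def]⟩⟩
    have hinf : s ≤ ⨅ p : {p : Fin n × Fin n // p.1 < p.2},
        |kron ga p.1.1 - kron ga p.1.2| := by
      apply le_ciInf
      rintro ⟨⟨a, b⟩, hab⟩
      have hab' : (a:ℕ) < (b:ℕ) := hab
      have hres := sep_lb m n hm h1 h2 a b hab' b.isLt
      rw [← hs] at hres
      simpa [kron] using hres
    have h0 : (0:ℝ) ≤ ⨅ p : {p : Fin n × Fin n // p.1 < p.2},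
        |kron ga p.1.1 - kron ga p.1.2| := le_trans hs_pos.le hinf
    linarith
  have hfill : fillDist (kron ga) n ≤ 2*s := by
    rw [fillDist]
    haveI : Nonempty (Set.Icc (0:ℝ) 1) := ⟨⟨0, by norm_num⟩⟩
    apply ciSup_le
    rintro ⟨y, hy⟩
    obtain ⟨i, hin, hb⟩ := fill_exists m n hm h1 h2 y hy.1 hy.2
    rw [← hs] at hb
    have hle : (⨅ i : Fin n, |(y:ℝ) - kron ga i|) ≤ |y - kron ga i| := by
      apply ciInf_le ⟨0, ?_⟩ (⟨i, hin⟩ : Fin n)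
      rintro _ ⟨i', rfl⟩
      exact abs_nonneg _
    refine le_trans hle ?_
    simpa [kron] using hb
  have hsep_pos : 0 < sepRad (kron ga) n := lt_of_lt_of_le (by linarith) hsep
  rw [div_le_iff₀ hsep_pos]
  linarith
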